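/- arXiv:1707.08513 — 3 statements merged into one kernel-verified Lean document; each statement's English description precedes it below -/
import Mathlib

section
/- The graph G on the fiber F_{N,t} (vertices are nonnegative integer vectors of length N summing to t, with an edge between x and y whenever y = x ± m_k for some column m_k of the basis B_N) is connected: any two elements of F_{N,t} are joined by a path of such moves keeping all entries nonnegative along the way. -/
/-- The `k`-th column of the Markov basis `B_N`: entry `1` in position `0`
(first position), `-1` in position `k`, and `0` elsewhere. -/
def basisMove (N k : ℕ) : Fin N → ℤ := fun i =>
  if (i : ℕ) = 0 then 1 else if (i : ℕ) = k then -1 else 0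

private def Rel5 (N : ℕ) : (Fin N → ℤ) → (Fin N → ℤ) → Prop :=
  fun a b => (∀ i, 0 ≤ a i) ∧ (∀ i, 0 ≤ b i) ∧
    ∃ k, 1 ≤ k ∧ k < N ∧ (b = a + basisMove N k ∨ b = a - basisMove N k)

private lemma rel5_symm (N : ℕ) : Symmetric (Rel5 N) := by
  rintro a b ⟨ha, hb, k, hk1, hkN, h | h⟩
  · exact ⟨hb, ha, k, hk1, hkN, Or.inr (by rw [h]; abel)⟩
  · exact ⟨hb, ha, k, hk1, hkN, Or.inl (by rw [h]; abel)⟩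

private lemma basisMove_split {N : ℕ} [NeZero N] (k : Fin N) (hk : (k : ℕ) ≠ 0) :
    basisMove N k = fun j => (if j = (0 : Fin N) then (1 : ℤ) else 0) +
      (if j = k then -1 else 0) := by
  funext j
  simp only [basisMove]
  rcases eq_or_ne (j : ℕ) 0 with h0 | h0
  · have hj : j = 0 := Fin.ext_iff.mpr (by simpa using h0)
    have hjk : j ≠ k := fun h => hk (h ▸ h0)
    simp [h0, hj, hjk, fun h => hjk (hj.trans h)]
    exact fun h => hjk (hj.trans h)
  · have hj : j ≠ 0 := fun h => h0 (by simp [h])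
    rcases eq_or_ne (j : ℕ) (k : ℕ) with hk' | hk'
    · have hjk : j = k := Fin.ext hk'
      have hk0 : k ≠ 0 := fun h => hk (by simp [h])
      simp [h0, hk', hjk, hj, hk0, hk]
    · have hjk : j ≠ k := fun h => hk' (by rw [h])
      simp [h0, hk', hj, hjk]

private lemma sum_basisMove {N : ℕ} [NeZero N] (k : Fin N) (hk : (k : ℕ) ≠ 0) :
    ∑ j, basisMove N k j = 0 := by
  rw [basisMove_split k hk]
  rw [Finset.sum_add_distrib]
  simp

private lemma sum_erase_basisMove {N : ℕ} [NeZero N] (k : Fin N) (hk : (k : ℕ) ≠ 0) :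
    ∑ j ∈ Finset.univ.erase 0, basisMove N k j = -1 := by
  have h := Finset.add_sum_erase Finset.univ (basisMove N k) (Finset.mem_univ (0 : Fin N))
  have h2 := sum_basisMove k hk
  have h0 : basisMove N k 0 = 1 := by simp [basisMove]
  omega

private lemma reach_top (N t : ℕ) [NeZero N] :
    ∀ n (x : Fin N → ℤ), (∀ i, 0 ≤ x i) → (∑ i, x i = t) →
      (∑ i ∈ Finset.univ.erase 0, x i).toNat = n →
      Relation.ReflTransGen (Rel5 N) x (fun i => if (i : ℕ) = 0 then (t : ℤ) else 0) := by
  intro n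
  induction n with
  | zero =>
    intro x hx0 hxt hn
    have hnn : 0 ≤ ∑ i ∈ Finset.univ.erase 0, x i :=
      Finset.sum_nonneg fun i _ => hx0 i
    have hz : ∑ i ∈ Finset.univ.erase 0, x i = 0 := by omega
    have hall : ∀ i ∈ Finset.univ.erase 0, x i = 0 :=
      (Finset.sum_eq_zero_iff_of_nonneg fun i _ => hx0 i).mp hz
    have hx0t : x 0 = t := by
      have h := Finset.add_sum_erase Finset.univ x (Finset.mem_univ (0 : Fin N))
      rw [hz] at h; omega
    have : x = fun i : Fin N => if (i : ℕ) = 0 then (t : ℤ) else 0 := by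
      funext i
      rcases eq_or_ne (i : ℕ) 0 with h | h
      · have : i = 0 := Fin.ext_iff.mpr (by simpa using h)
        simp [h, this, hx0t]
      · have hi : i ≠ 0 := fun hh => h (by simp [hh])
        simp [h, hall i (Finset.mem_erase.mpr ⟨hi, Finset.mem_univ i⟩)]
    rw [this]
  | succ n ih =>
    intro x hx0 hxt hn
    have hnn : 0 ≤ ∑ i ∈ Finset.univ.erase 0, x i :=
      Finset.sum_nonneg fun i _ => hx0 i
    have hs : ∑ i ∈ Finset.univ.erase 0, x i = n + 1 := by omega
    have hpos : ∃ i ∈ Finset.univ.erase (0 : Fin N), 0 < x i := by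
      by_contra h
      push_neg at h
      have : ∑ i ∈ Finset.univ.erase 0, x i ≤ 0 :=
        Finset.sum_nonpos fun i hi => h i hi
      omega
    obtain ⟨k, hk, hkpos⟩ := hpos
    have hk0 : (k : ℕ) ≠ 0 := by
      intro h
      exact (Finset.mem_erase.mp hk).1 (Fin.ext_iff.mpr (by simpa using h))
    set b := x + basisMove N (k : ℕ) with hb
    have hbk : (⟨(k : ℕ), k.isLt⟩ : Fin N) = k := Fin.ext rfl
    have hbval : ∀ j, b j = x j + basisMove N (k : ℕ) j := fun j => rfl
    have hb0 : ∀ j, 0 ≤ b j := by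
      intro j
      rw [hbval]
      simp only [basisMove]
      rcases eq_or_ne (j : ℕ) 0 with h | h
      · simp [h]; linarith [hx0 j]
      · rcases eq_or_ne (j : ℕ) (k : ℕ) with h' | h'
        · have : j = k := Fin.ext h'
          simp [h, h', this]; omega
        · simp [h, h']; exact hx0 j
    have hbt : ∑ i, b i = t := by
      have : ∑ i, b i = ∑ i, x i + ∑ i, basisMove N (k : ℕ) i := by
        simp [hbval, Finset.sum_add_distrib]
      rw [this, hxt]
      have := sum_basisMove k hk0
      omega
    have hbn : (∑ i ∈ Finset.univ.erase 0, b i).toNat = n := by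
      have : ∑ i ∈ Finset.univ.erase 0, b i
          = ∑ i ∈ Finset.univ.erase 0, x i + ∑ i ∈ Finset.univ.erase 0, basisMove N (k : ℕ) i := by
        simp [hbval, Finset.sum_add_distrib]
      rw [this, hs]
      have := sum_erase_basisMove k hk0
      omega
    have hstep : Rel5 N x b :=
      ⟨hx0, hb0, (k : ℕ), by omega, k.isLt, Or.inl rfl⟩
    exact Relation.ReflTransGen.head hstep (ih b hb0 hbt hbn)

theorem stmt5 (N t : ℕ) (hN : 2 ≤ N) (x y : Fin N → ℤ)
    (hx0 : ∀ i, 0 ≤ x i) (hy0 : ∀ i, 0 ≤ y i)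
    (hxt : ∑ i, x i = t) (hyt : ∑ i, y i = t) :
    Relation.ReflTransGen
      (fun a b : Fin N → ℤ => (∀ i, 0 ≤ a i) ∧ (∀ i, 0 ≤ b i) ∧
        ∃ k, 1 ≤ k ∧ k < N ∧ (b = a + basisMove N k ∨ b = a - basisMove N k))
      x y := by
  haveI : NeZero N := ⟨by omega⟩
  have hx := reach_top N t _ x hx0 hxt rfl
  have hy := reach_top N t _ y hy0 hyt rfl
  have hy' := (show Std.Symm (Relation.ReflTransGen (Rel5 N)) from
    @Relation.ReflTransGen.stdSymm _ _ ⟨fun _ _ h => rel5_symm N h⟩).symm _ _ hy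
  exact hx.trans hy'
end

section
/- (MAD reduction by orbit conditioning) With the same setup, the mean absolute deviation satisfies E_p[|1{U(y)≤u} − F|] ≥ E_{p_π}[|F_U(u|π) − F|], where F = F_U(u|F_{N,t}) is the common mean. Moreover E_p[|1{U(y)≤u} − F|] = ∑_π p_π(π)(F − 2 F_U(u|π) F + F_U(u|π)). -/
theorem stmt13 (N t : ℕ) (F : Finset (Fin N → ℕ))
    (hF : ∀ y : Fin N → ℕ, y ∈ F ↔ ∑ i, y i = t)
    (P : Finset (Finset (Fin N → ℕ)))
    (hsub : ∀ π ∈ P, π ⊆ F) (hne : ∀ π ∈ P, π.Nonempty)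
    (hcover : ∀ y ∈ F, ∃ π ∈ P, y ∈ π)
    (hdisj : (P : Set (Finset (Fin N → ℕ))).PairwiseDisjoint id)
    (p : (Fin N → ℕ) → ℝ) (hp0 : ∀ y, 0 ≤ p y) (hp1 : ∑ y ∈ F, p y = 1)
    (hconst : ∀ π ∈ P, ∀ x ∈ π, ∀ z ∈ π, p x = p z)
    (U : (Fin N → ℕ) → ℝ) (u : ℝ) [DecidablePred fun y : Fin N → ℕ => U y ≤ u]
    (Fv : ℝ) (hFv : Fv = ∑ y ∈ F, p y * (if U y ≤ u then (1 : ℝ) else 0)) :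
    (∑ y ∈ F, p y * |(if U y ≤ u then (1 : ℝ) else 0) - Fv|
      ≥ ∑ π ∈ P, (∑ y ∈ π, p y) *
          |((π.filter fun y => U y ≤ u).card : ℝ) / (π.card : ℝ) - Fv|) ∧
    (∑ y ∈ F, p y * |(if U y ≤ u then (1 : ℝ) else 0) - Fv|
      = ∑ π ∈ P, (∑ y ∈ π, p y) *
          (Fv - 2 * (((π.filter fun y => U y ≤ u).card : ℝ) / (π.card : ℝ)) * Fv
            + ((π.filter fun y => U y ≤ u).card : ℝ) / (π.card : ℝ))) := by
  classical
  have hFb : F = P.biUnion id := by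
    ext y
    simp only [Finset.mem_biUnion, id]
    constructor
    · exact hcover y
    · rintro ⟨π, hπ, hy⟩; exact hsub π hπ hy
  have hFv0 : 0 ≤ Fv := by
    rw [hFv]
    apply Finset.sum_nonneg
    intro y _
    have := hp0 y
    split <;> nlinarith
  have hFv1 : Fv ≤ 1 := by
    rw [hFv, ← hp1]
    apply Finset.sum_le_sum
    intro y _
    have := hp0 y
    split <;> nlinarith
  have key : ∀ π ∈ P, ∑ y ∈ π, p y * |(if U y ≤ u then (1 : ℝ) else 0) - Fv|
      = (∑ y ∈ π, p y) *
          (Fv - 2 * (((π.filter fun y => U y ≤ u).card : ℝ) / (π.card : ℝ)) * Fv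
            + ((π.filter fun y => U y ≤ u).card : ℝ) / (π.card : ℝ)) := by
    intro π hπ
    obtain ⟨y0, hy0⟩ := hne π hπ
    set c := p y0 with hc0
    have hc : ∀ y ∈ π, p y = c := fun y hy => hconst π hπ y hy y0 hy0
    have hn : (0 : ℝ) < (π.card : ℝ) := by
      exact_mod_cast Finset.card_pos.mpr ⟨y0, hy0⟩
    have hsum : ∑ y ∈ π, p y = c * (π.card : ℝ) := by
      rw [Finset.sum_congr rfl hc]
      simp [mul_comm]
    have hsumf : ∑ y ∈ π.filter (fun y => U y ≤ u), p y
        = c * ((π.filter fun y => U y ≤ u).card : ℝ) := by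
      rw [Finset.sum_congr rfl (fun y hy => hc y (Finset.mem_filter.mp hy).1)]
      simp [mul_comm]
    have hsplit : ∑ y ∈ π, p y * |(if U y ≤ u then (1 : ℝ) else 0) - Fv|
        = (1 - Fv) * (c * ((π.filter fun y => U y ≤ u).card : ℝ))
          + Fv * (c * (π.card : ℝ) - c * ((π.filter fun y => U y ≤ u).card : ℝ)) := by
      rw [← Finset.sum_filter_add_sum_filter_not π (fun y => U y ≤ u)]
      have h1 : ∑ y ∈ π.filter (fun y => U y ≤ u), p y * |(if U y ≤ u then (1 : ℝ) else 0) - Fv|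
          = (1 - Fv) * ∑ y ∈ π.filter (fun y => U y ≤ u), p y := by
        rw [Finset.mul_sum]
        apply Finset.sum_congr rfl
        intro y hy
        have : U y ≤ u := (Finset.mem_filter.mp hy).2
        rw [if_pos this, abs_of_nonneg (by linarith)]
        ring
      have h2 : ∑ y ∈ π.filter (fun y => ¬ U y ≤ u), p y * |(if U y ≤ u then (1 : ℝ) else 0) - Fv|
          = Fv * ∑ y ∈ π.filter (fun y => ¬ U y ≤ u), p y := by
        rw [Finset.mul_sum]
        apply Finset.sum_congr rfl
        intro y hy
        have : ¬ U y ≤ u := (Finset.mem_filter.mp hy).2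
        rw [if_neg this, abs_of_nonpos (by linarith), ]
        ring
      have h3 : ∑ y ∈ π.filter (fun y => ¬ U y ≤ u), p y
          = (∑ y ∈ π, p y) - ∑ y ∈ π.filter (fun y => U y ≤ u), p y := by
        rw [← Finset.sum_filter_add_sum_filter_not π (fun y => U y ≤ u)]
        ring
      rw [h1, h2, h3, hsum, hsumf]
    rw [hsplit, hsum]
    field_simp
    ring
  have hineq : ∀ π ∈ P,
      (∑ y ∈ π, p y) *
          |((π.filter fun y => U y ≤ u).card : ℝ) / (π.card : ℝ) - Fv|
      ≤ (∑ y ∈ π, p y) *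
          (Fv - 2 * (((π.filter fun y => U y ≤ u).card : ℝ) / (π.card : ℝ)) * Fv
            + ((π.filter fun y => U y ≤ u).card : ℝ) / (π.card : ℝ)) := by
    intro π hπ
    have hps : 0 ≤ ∑ y ∈ π, p y := Finset.sum_nonneg fun y _ => hp0 y
    apply mul_le_mul_of_nonneg_left _ hps
    set q : ℝ := ((π.filter fun y => U y ≤ u).card : ℝ) / (π.card : ℝ) with hqdef
    have hn : (0 : ℝ) < (π.card : ℝ) := by
      exact_mod_cast Finset.card_pos.mpr (hne π hπ)
    have hq0 : 0 ≤ q := by positivity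
    have hq1 : q ≤ 1 := by
      rw [hqdef, div_le_one hn]
      exact_mod_cast Finset.card_filter_le π _
    rw [abs_le]
    constructor <;> nlinarith
  have heq : ∑ y ∈ F, p y * |(if U y ≤ u then (1 : ℝ) else 0) - Fv|
      = ∑ π ∈ P, (∑ y ∈ π, p y) *
          (Fv - 2 * (((π.filter fun y => U y ≤ u).card : ℝ) / (π.card : ℝ)) * Fv
            + ((π.filter fun y => U y ≤ u).card : ℝ) / (π.card : ℝ)) := by
    rw [hFb, Finset.sum_biUnion hdisj]
    exact Finset.sum_congr rfl key
  refine ⟨?_, heq⟩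
  rw [heq]
  exact Finset.sum_le_sum hineq
end

section
/- The set of moves B_t^{(π)} = { m_{k,i} : 2 ≤ k ≤ t, 1 ≤ i ≤ ⌊k/2⌋ } is a Markov basis for the fiber F^{(π)}_{N,t} = { f ∈ ℕ^{t+1} : ∑_j j·f_j = t and ∑_j f_j = N }: any two elements of F^{(π)}_{N,t} are connected by a finite sequence of signed moves ±m_{k,i} such that all intermediate vectors remain in ℕ^{t+1} (hence in F^{(π)}_{N,t}). -/
/-- The move `m_{k,i}` on `ℤ^(t+1)`: start from the zero vector, set coordinates
`0` and `k` to `-1`, then add `1` at coordinate `i` and add `1` at coordinate `k - i`. -/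
def freqMove (t k i : ℕ) : Fin (t + 1) → ℤ := fun j =>
  (if (j : ℕ) = 0 then -1 else 0) + (if (j : ℕ) = k then -1 else 0) +
    (if (j : ℕ) = i then 1 else 0) + (if (j : ℕ) = k - i then 1 else 0)

/-- The move relation. -/
def MRel (t : ℕ) (a b : Fin (t + 1) → ℤ) : Prop :=
  (∀ j, 0 ≤ a j) ∧ (∀ j, 0 ≤ b j) ∧
    ∃ k i, 2 ≤ k ∧ k ≤ t ∧ 1 ≤ i ∧ i ≤ k / 2 ∧
      (b = a + freqMove t k i ∨ b = a - freqMove t k i)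

lemma mrel_symm (t : ℕ) : Symmetric (MRel t) := by
  rintro a b ⟨ha, hb, k, i, h1, h2, h3, h4, h5 | h5⟩
  · exact ⟨hb, ha, k, i, h1, h2, h3, h4, Or.inr (by rw [h5, add_sub_cancel_right])⟩
  · exact ⟨hb, ha, k, i, h1, h2, h3, h4, Or.inl (by rw [h5, sub_add_cancel])⟩

lemma sum_if_const (t a : ℕ) (ha : a ≤ t) (c : ℤ) :
    (∑ j : Fin (t + 1), if (j : ℕ) = a then c else 0) = c := by
  rw [Finset.sum_eq_single (⟨a, Nat.lt_succ_of_le ha⟩ : Fin (t + 1))]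
  · simp
  · intro b _ hb
    exact if_neg fun h => hb (Fin.ext h)
  · intro h; exact absurd (Finset.mem_univ _) h

lemma sum_if_mul (t a : ℕ) (ha : a ≤ t) (c : ℤ) :
    (∑ j : Fin (t + 1), ((j : ℕ) : ℤ) * if (j : ℕ) = a then c else 0) = a * c := by
  rw [Finset.sum_eq_single (⟨a, Nat.lt_succ_of_le ha⟩ : Fin (t + 1))]
  · simp
  · intro b _ hb
    rw [if_neg fun h => hb (Fin.ext h), mul_zero]
  · intro h; exact absurd (Finset.mem_univ _) h

lemma sum_freqMove (t k i : ℕ) (hk : k ≤ t) (hik : i ≤ k) :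
    (∑ j : Fin (t + 1), freqMove t k i j) = 0 := by
  simp only [freqMove]
  rw [Finset.sum_add_distrib, Finset.sum_add_distrib, Finset.sum_add_distrib,
    sum_if_const t 0 (by omega) (-1), sum_if_const t k hk (-1),
    sum_if_const t i (by omega) 1, sum_if_const t (k - i) (by omega) 1]
  ring

lemma weight_freqMove (t k i : ℕ) (hk : k ≤ t) (hik : i ≤ k) :
    (∑ j : Fin (t + 1), ((j : ℕ) : ℤ) * freqMove t k i j) = 0 := by
  simp only [freqMove, mul_add]
  rw [Finset.sum_add_distrib, Finset.sum_add_distrib, Finset.sum_add_distrib,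
    sum_if_mul t 0 (by omega) (-1), sum_if_mul t k hk (-1),
    sum_if_mul t i (by omega) 1, sum_if_mul t (k - i) (by omega) 1,
    Nat.cast_sub hik]
  push_cast
  ring

/-- The canonical fiber element: `N-1` parts of size `0` and one part of size `t`. -/
def canon (t N : ℕ) : Fin (t + 1) → ℤ := fun j =>
  if (j : ℕ) = 0 then (N : ℤ) - 1 else if (j : ℕ) = t then 1 else 0

lemma exists_pos {n : ℕ} {s : Finset (Fin n)} {w : Fin n → ℤ}
    (h : 0 < ∑ j ∈ s, w j) : ∃ j ∈ s, 0 < w j := by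
  by_contra hc
  push_neg at hc
  exact absurd (Finset.sum_nonpos hc) (by linarith)

lemma toCanon (t N : ℕ) (ht : 1 ≤ t) :
    ∀ n : ℕ, ∀ f : Fin (t + 1) → ℤ, (∀ j, 0 ≤ f j) → (∑ j, f j = N) →
      (∑ j : Fin (t + 1), ((j : ℕ) : ℤ) * f j = t) → ((N : ℤ) - f 0).toNat ≤ n →
      Relation.ReflTransGen (MRel t) f (canon t N) := by
  intro n
  induction n with
  | zero =>
    intro f hf hfN hft hn
    exfalso
    -- the weighted sum over nonzero indices is positive, so some part exists
    have hs : ∑ j ∈ Finset.univ.erase (0 : Fin (t + 1)), f j = (N : ℤ) - f 0 := by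
      have := Finset.add_sum_erase Finset.univ f (Finset.mem_univ (0 : Fin (t + 1)))
      rw [hfN] at this
      linarith
    have hw : ∑ j ∈ Finset.univ.erase (0 : Fin (t + 1)), ((j : ℕ) : ℤ) * f j = (t : ℤ) := by
      have := Finset.add_sum_erase Finset.univ
        (fun j : Fin (t + 1) => ((j : ℕ) : ℤ) * f j) (Finset.mem_univ (0 : Fin (t + 1)))
      simp only [Fin.val_zero, Nat.cast_zero, zero_mul, zero_add] at this
      rw [this]; exact hft
    have hpos : (0 : ℤ) < ∑ j ∈ Finset.univ.erase (0 : Fin (t + 1)), ((j : ℕ) : ℤ) * f j := by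
      rw [hw]; exact_mod_cast ht
    obtain ⟨j0, hj0s, hj0⟩ := exists_pos hpos
    have hfj0 : 0 < f j0 := by
      by_contra hcon
      push_neg at hcon
      nlinarith [Nat.cast_nonneg (α := ℤ) (j0 : ℕ)]
    have hle : f j0 ≤ ∑ j ∈ Finset.univ.erase (0 : Fin (t + 1)), f j :=
      Finset.single_le_sum (fun l _ => hf l) hj0s
    omega
  | succ n ih =>
    intro f hf hfN hft hn
    have hs : ∑ j ∈ Finset.univ.erase (0 : Fin (t + 1)), f j = (N : ℤ) - f 0 := by
      have := Finset.add_sum_erase Finset.univ f (Finset.mem_univ (0 : Fin (t + 1)))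
      rw [hfN] at this
      linarith
    have hw : ∑ j ∈ Finset.univ.erase (0 : Fin (t + 1)), ((j : ℕ) : ℤ) * f j = (t : ℤ) := by
      have := Finset.add_sum_erase Finset.univ
        (fun j : Fin (t + 1) => ((j : ℕ) : ℤ) * f j) (Finset.mem_univ (0 : Fin (t + 1)))
      simp only [Fin.val_zero, Nat.cast_zero, zero_mul, zero_add] at this
      rw [this]; exact hft
    have hpos : (0 : ℤ) < ∑ j ∈ Finset.univ.erase (0 : Fin (t + 1)), ((j : ℕ) : ℤ) * f j := by
      rw [hw]; exact_mod_cast ht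
    obtain ⟨j0, hj0s, hj0⟩ := exists_pos hpos
    have hfj0 : 0 < f j0 := by
      by_contra hcon
      push_neg at hcon
      nlinarith [Nat.cast_nonneg (α := ℤ) (j0 : ℕ)]
    have hj0v : 1 ≤ (j0 : ℕ) := by
      rcases Finset.mem_erase.mp hj0s with ⟨hne, -⟩
      have : (j0 : ℕ) ≠ 0 := fun h => hne (Fin.ext (by simp [h]))
      omega
    have hle : f j0 ≤ ∑ j ∈ Finset.univ.erase (0 : Fin (t + 1)), f j :=
      Finset.single_le_sum (fun l _ => hf l) hj0s
    by_cases hbig : (N : ℤ) - f 0 ≤ 1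
    · -- base: f is the canonical element
      have hfj0' : f j0 = 1 := by omega
      have hothers : ∀ l ∈ Finset.univ.erase (0 : Fin (t + 1)), l ≠ j0 → f l = 0 := by
        intro l hls hlne
        have h1 : f j0 + ∑ j ∈ (Finset.univ.erase (0 : Fin (t + 1))).erase j0, f j
            = ∑ j ∈ Finset.univ.erase (0 : Fin (t + 1)), f j :=
          Finset.add_sum_erase _ f hj0s
        have h2 : f l ≤ ∑ j ∈ (Finset.univ.erase (0 : Fin (t + 1))).erase j0, f j :=
          Finset.single_le_sum (fun x _ => hf x) (Finset.mem_erase.mpr ⟨hlne, hls⟩)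
        have := hf l
        omega
      have hj0t : (j0 : ℕ) = t := by
        have : ∑ j ∈ Finset.univ.erase (0 : Fin (t + 1)), ((j : ℕ) : ℤ) * f j
            = ((j0 : ℕ) : ℤ) * f j0 := by
          apply Finset.sum_eq_single_of_mem j0 hj0s
          intro l hls hlne
          rw [hothers l hls hlne, mul_zero]
        rw [this, hfj0', mul_one] at hw
        exact_mod_cast hw
      have hf0v : f 0 = (N : ℤ) - 1 := by omega
      have : f = canon t N := by
        funext l
        unfold canon
        by_cases hl0 : (l : ℕ) = 0
        · have : l = 0 := Fin.ext (by simp [hl0])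
          rw [if_pos hl0, this, hf0v]
        · rw [if_neg hl0]
          by_cases hlt : (l : ℕ) = t
          · have : l = j0 := Fin.ext (by rw [hlt, hj0t])
            rw [if_pos hlt, this, hfj0']
          · rw [if_neg hlt]
            apply hothers
            · exact Finset.mem_erase.mpr ⟨fun h => hl0 (by simp [h]), Finset.mem_univ l⟩
            · intro h; exact hlt (by rw [h, hj0t])
      rw [this]
    · -- step: at least two parts, merge two of them
      push_neg at hbig
      -- find a suitable pair (aF, bF)
      have hpair : ∃ aF bF : Fin (t + 1), 1 ≤ (aF : ℕ) ∧ (aF : ℕ) ≤ (bF : ℕ) ∧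
          1 ≤ f aF ∧ 1 ≤ f bF ∧ ((aF : ℕ) = (bF : ℕ) → 2 ≤ f aF) ∧
          (aF : ℕ) + (bF : ℕ) ≤ t := by
        by_cases h2 : 2 ≤ f j0
        · refine ⟨j0, j0, hj0v, le_refl _, by omega, by omega, fun _ => h2, ?_⟩
          have hterm : ((j0 : ℕ) : ℤ) * f j0 ≤ (t : ℤ) := by
            rw [← hw]
            exact Finset.single_le_sum
              (f := fun j : Fin (t + 1) => ((j : ℕ) : ℤ) * f j)
              (fun l _ => mul_nonneg (Nat.cast_nonneg _) (hf l)) hj0s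
          have : ((j0 : ℕ) : ℤ) * 2 ≤ ((j0 : ℕ) : ℤ) * f j0 :=
            mul_le_mul_of_nonneg_left h2 (Nat.cast_nonneg _)
          have : ((j0 : ℕ) : ℤ) + ((j0 : ℕ) : ℤ) ≤ (t : ℤ) := by linarith
          exact_mod_cast this
        · have hfj0' : f j0 = 1 := by omega
          have hsum' : 0 < ∑ j ∈ (Finset.univ.erase (0 : Fin (t + 1))).erase j0, f j := by
            have h1 : f j0 + ∑ j ∈ (Finset.univ.erase (0 : Fin (t + 1))).erase j0, f j
                = ∑ j ∈ Finset.univ.erase (0 : Fin (t + 1)), f j :=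
              Finset.add_sum_erase _ f hj0s
            omega
          obtain ⟨j1, hj1s, hj1⟩ := exists_pos hsum'
          rcases Finset.mem_erase.mp hj1s with ⟨hj1ne, hj1s'⟩
          have hj1v : 1 ≤ (j1 : ℕ) := by
            rcases Finset.mem_erase.mp hj1s' with ⟨hne, -⟩
            have : (j1 : ℕ) ≠ 0 := fun h => hne (Fin.ext (by simp [h]))
            omega
          have hvne : (j1 : ℕ) ≠ (j0 : ℕ) := fun h => hj1ne (Fin.ext h)
          have hsum2 : ((j0 : ℕ) : ℤ) * f j0 + ((j1 : ℕ) : ℤ) * f j1 ≤ (t : ℤ) := by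
            rw [← hw]
            have hsub : ({j0, j1} : Finset (Fin (t + 1))) ⊆
                Finset.univ.erase (0 : Fin (t + 1)) := by
              intro x hx
              rcases Finset.mem_insert.mp hx with h | h
              · exact h ▸ hj0s
              · exact (Finset.mem_singleton.mp h) ▸ hj1s'
            have := Finset.sum_le_sum_of_subset_of_nonneg hsub
              (fun l _ _ => mul_nonneg (Nat.cast_nonneg (α := ℤ) (l : ℕ)) (hf l))
            rwa [Finset.sum_pair (fun h => hj1ne (h.symm)) ] at this
          have hkb : (j0 : ℕ) + (j1 : ℕ) ≤ t := by
            have ha' : ((j0 : ℕ) : ℤ) ≤ ((j0 : ℕ) : ℤ) * f j0 := by nlinarith [Nat.cast_nonneg (α := ℤ) (j0 : ℕ)]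
            have hb' : ((j1 : ℕ) : ℤ) ≤ ((j1 : ℕ) : ℤ) * f j1 := by nlinarith [Nat.cast_nonneg (α := ℤ) (j1 : ℕ)]
            have : ((j0 : ℕ) : ℤ) + ((j1 : ℕ) : ℤ) ≤ (t : ℤ) := by linarith
            exact_mod_cast this
          by_cases hord : (j0 : ℕ) ≤ (j1 : ℕ)
          · exact ⟨j0, j1, hj0v, hord, by omega, by omega, fun h => absurd h.symm hvne, hkb⟩
          · exact ⟨j1, j0, hj1v, by omega, by omega, by omega, fun h => absurd h hvne,
              by omega⟩
      obtain ⟨aF, bF, hav, habv, hfa, hfb, habEq, hkt⟩ := hpair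
      have hb1 : 1 ≤ (bF : ℕ) := le_trans hav habv
      have hksub : (aF : ℕ) + (bF : ℕ) - (aF : ℕ) = (bF : ℕ) := by omega
      have hf'nn : ∀ l, 0 ≤ (f - freqMove t ((aF : ℕ) + (bF : ℕ)) (aF : ℕ)) l := by
        intro l
        rw [Pi.sub_apply]
        by_cases ha' : (l : ℕ) = (aF : ℕ)
        · have hlA : l = aF := Fin.ext ha'
          by_cases heq : (aF : ℕ) = (bF : ℕ)
          · have e : freqMove t ((aF : ℕ) + (bF : ℕ)) (aF : ℕ) l = 2 := by
              unfold freqMove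
              split_ifs <;> omega
            rw [e, hlA]
            have := habEq heq
            linarith
          · have e : freqMove t ((aF : ℕ) + (bF : ℕ)) (aF : ℕ) l = 1 := by
              unfold freqMove
              split_ifs <;> omega
            rw [e, hlA]; linarith
        · by_cases hb' : (l : ℕ) = (bF : ℕ)
          · have hlB : l = bF := Fin.ext hb'
            have e : freqMove t ((aF : ℕ) + (bF : ℕ)) (aF : ℕ) l = 1 := by
              unfold freqMove
              split_ifs <;> omega
            rw [e, hlB]; linarith
          · have e : -1 ≤ freqMove t ((aF : ℕ) + (bF : ℕ)) (aF : ℕ) l ∧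
                freqMove t ((aF : ℕ) + (bF : ℕ)) (aF : ℕ) l ≤ 0 := by
              unfold freqMove
              constructor <;> (split_ifs <;> omega)
            linarith [hf l, e.1, e.2]
      have hstep : MRel t f (f - freqMove t ((aF : ℕ) + (bF : ℕ)) (aF : ℕ)) :=
        ⟨hf, hf'nn, (aF : ℕ) + (bF : ℕ), (aF : ℕ), by omega, hkt, hav, by omega, Or.inr rfl⟩
      have hsum' : ∑ j, (f - freqMove t ((aF : ℕ) + (bF : ℕ)) (aF : ℕ)) j = (N : ℤ) := by
        simp only [Pi.sub_apply]
        rw [Finset.sum_sub_distrib, hfN,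
          sum_freqMove t ((aF : ℕ) + (bF : ℕ)) (aF : ℕ) hkt (by omega), sub_zero]
      have hwt' : ∑ j : Fin (t + 1),
          ((j : ℕ) : ℤ) * (f - freqMove t ((aF : ℕ) + (bF : ℕ)) (aF : ℕ)) j = (t : ℤ) := by
        simp only [Pi.sub_apply, mul_sub]
        rw [Finset.sum_sub_distrib, hft,
          weight_freqMove t ((aF : ℕ) + (bF : ℕ)) (aF : ℕ) hkt (by omega), sub_zero]
      have hf'0 : (f - freqMove t ((aF : ℕ) + (bF : ℕ)) (aF : ℕ)) 0 = f 0 + 1 := by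
        rw [Pi.sub_apply]
        have e : freqMove t ((aF : ℕ) + (bF : ℕ)) (aF : ℕ) (0 : Fin (t + 1)) = -1 := by
          have h0 : ((0 : Fin (t + 1)) : ℕ) = 0 := rfl
          unfold freqMove
          rw [h0]
          split_ifs <;> omega
        rw [e]; ring
      have hmeas : ((N : ℤ) - (f - freqMove t ((aF : ℕ) + (bF : ℕ)) (aF : ℕ)) 0).toNat ≤ n := by
        rw [hf'0]; omega
      exact Relation.ReflTransGen.head hstep
        (ih _ hf'nn hsum' hwt' hmeas)

theorem stmt16 (t N : ℕ) (ht : 1 ≤ t) (hN : t ≤ N) (f g : Fin (t + 1) → ℤ)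
    (hf0 : ∀ j, 0 ≤ f j) (hg0 : ∀ j, 0 ≤ g j)
    (hfN : ∑ j, f j = N) (hgN : ∑ j, g j = N)
    (hft : ∑ j : Fin (t + 1), ((j : ℕ) : ℤ) * f j = t)
    (hgt : ∑ j : Fin (t + 1), ((j : ℕ) : ℤ) * g j = t) :
    Relation.ReflTransGen
      (fun a b : Fin (t + 1) → ℤ => (∀ j, 0 ≤ a j) ∧ (∀ j, 0 ≤ b j) ∧
        ∃ k i, 2 ≤ k ∧ k ≤ t ∧ 1 ≤ i ∧ i ≤ k / 2 ∧
          (b = a + freqMove t k i ∨ b = a - freqMove t k i))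
      f g := by
  show Relation.ReflTransGen (MRel t) f g
  have h1 := toCanon t N ht (((N : ℤ) - f 0).toNat) f hf0 hfN hft le_rfl
  have h2 := toCanon t N ht (((N : ℤ) - g 0).toNat) g hg0 hgN hgt le_rfl
  exact h1.trans ((@Relation.ReflTransGen.symmetric _ (MRel t) ⟨fun a b h => mrel_symm t h⟩).symm _ _ h2)
end
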